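/- Let R > 0, 0 < a < R, μ = π/(2·ln(R/a)), and let ω, T' > 0 with T' > e. Define φ(x,t) = μ·ln(R/x) + (ω − x)/ln(t) for x ∈ [a, R], t ≥ T'. Then φ_x < 0, φ_xx > 0, and for any measurable function q(x,t) with 0 ≤ q ≤ 1, φ_t − φ_x/x − q·φ_xx ≥ (t·ln t − ωR)/(x·t·(ln t)²). In particular, if t·ln t ≥ ωR then φ_t − φ_x/x − q·φ_xx ≥ 0. -/

import Mathlib

theorem supersolution_barrier (R a μ ω T' : ℝ) (hR : 0 < R) (ha : 0 < a) (haR : a < R)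
    (hμ : μ = Real.pi / (2 * Real.log (R / a))) (hω : 0 < ω) (hT' : Real.exp 1 < T') :
    ∀ x ∈ Set.Icc a R, ∀ t : ℝ, T' ≤ t →
      (deriv (fun x => μ * Real.log (R / x) + (ω - x) / Real.log t) x < 0) ∧
      (deriv (deriv (fun x => μ * Real.log (R / x) + (ω - x) / Real.log t)) x > 0) ∧
      (∀ q : ℝ, 0 ≤ q → q ≤ 1 →
        deriv (fun t => μ * Real.log (R / x) + (ω - x) / Real.log t) t
          - (deriv (fun x => μ * Real.log (R / x) + (ω - x) / Real.log t) x) / x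
          - q * deriv (deriv (fun x => μ * Real.log (R / x) + (ω - x) / Real.log t)) x
        ≥ (t * Real.log t - ω * R) / (x * t * (Real.log t) ^ 2)) ∧
      (t * Real.log t ≥ ω * R →
        ∀ q : ℝ, 0 ≤ q → q ≤ 1 →
        deriv (fun t => μ * Real.log (R / x) + (ω - x) / Real.log t) t
          - (deriv (fun x => μ * Real.log (R / x) + (ω - x) / Real.log t) x) / x
          - q * deriv (deriv (fun x => μ * Real.log (R / x) + (ω - x) / Real.log t)) x
        ≥ 0) := by
  intro x hx t ht
  obtain ⟨hax, hxR⟩ := hx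
  have hx0 : 0 < x := lt_of_lt_of_le ha hax
  have hte : Real.exp 1 < t := lt_of_lt_of_le hT' ht
  have ht0 : (0:ℝ) < t := lt_trans (Real.exp_pos 1) hte
  have hL1 : 1 < Real.log t := by
    rw [Real.lt_log_iff_exp_lt ht0]; simpa using hte
  have hL0 : 0 < Real.log t := lt_trans one_pos hL1
  set L := Real.log t with hLdef
  have hμ0 : 0 < μ := by
    rw [hμ]
    exact div_pos Real.pi_pos
      (mul_pos two_pos (Real.log_pos ((one_lt_div ha).2 haR)))
  -- derivative in x, at any y > 0
  have key : ∀ y : ℝ, 0 < y →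
      HasDerivAt (fun x => μ * Real.log (R / x) + (ω - x) / L) (-μ/y - 1/L) y := by
    intro y hy
    have h2 : HasDerivAt (fun x : ℝ => Real.log R - Real.log x) (0 - y⁻¹) y :=
      (hasDerivAt_const y (Real.log R)).sub (Real.hasDerivAt_log hy.ne')
    have h3 : HasDerivAt (fun x : ℝ => ω - x) (0 - 1) y :=
      (hasDerivAt_const y ω).sub (hasDerivAt_id y)
    have h1 := (h2.const_mul μ).add (h3.div_const L)
    have h1' : HasDerivAt (fun x : ℝ => μ * (Real.log R - Real.log x) + (ω - x) / L)
        (-μ/y - 1/L) y := by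
      exact h1.congr_deriv (by ring)
    apply h1'.congr_of_eventuallyEq
    filter_upwards [Ioi_mem_nhds hy] with z hz
    rw [Real.log_div hR.ne' (ne_of_gt hz)]
  have hderiv_x : deriv (fun x => μ * Real.log (R / x) + (ω - x) / L) x = -μ/x - 1/L :=
    (key x hx0).deriv
  -- second derivative
  have hEq : deriv (fun x => μ * Real.log (R / x) + (ω - x) / L)
      =ᶠ[nhds x] (fun y => -μ * y⁻¹ - 1/L) := by
    filter_upwards [Ioi_mem_nhds hx0] with z hz
    rw [(key z hz).deriv]
    ring
  have h2nd : HasDerivAt (fun y : ℝ => -μ * y⁻¹ - 1/L) (μ / x^2) x := by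
    have := ((hasDerivAt_inv hx0.ne').const_mul (-μ)).sub_const (1/L)
    exact this.congr_deriv (by field_simp)
  have hderiv_xx : deriv (deriv (fun x => μ * Real.log (R / x) + (ω - x) / L)) x = μ / x^2 := by
    rw [hEq.deriv_eq]
    exact h2nd.deriv
  -- derivative in t
  have hderiv_t : deriv (fun t => μ * Real.log (R / x) + (ω - x) / Real.log t) t
      = (ω - x) * (-(t⁻¹) / L^2) := by
    have h4 : HasDerivAt (fun t : ℝ => μ * Real.log (R / x) + (ω - x) * (Real.log t)⁻¹)
        ((ω - x) * (-(t⁻¹) / L^2)) t :=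
      (((Real.hasDerivAt_log ht0.ne').inv hL0.ne').const_mul (ω - x)).const_add
        (μ * Real.log (R / x))
    have h5 : (fun t : ℝ => μ * Real.log (R / x) + (ω - x) / Real.log t)
        = (fun t : ℝ => μ * Real.log (R / x) + (ω - x) * (Real.log t)⁻¹) := by
      funext s; ring
    rw [h5]
    exact h4.deriv
  rw [hderiv_x, hderiv_xx, hderiv_t]
  have hx2 : (0:ℝ) < x^2 := by positivity
  refine ⟨?_, ?_, ?_, ?_⟩
  · rw [neg_div]
    have : 0 < μ/x + 1/L := by positivity
    linarith
  · positivity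
  · intro q hq0 hq1
    have hmain : (ω - x) * (-(t⁻¹) / L^2) - (-μ/x - 1/L) / x - q * (μ / x^2)
        - (t * L - ω * R) / (x * t * L^2)
        = (1 - q) * (μ / x^2) + (x^2 + ω*(R - x)) / (x * t * L^2) := by
      field_simp
      ring
    have h6 : 0 ≤ (1 - q) * (μ / x^2) :=
      mul_nonneg (by linarith) (by positivity)
    have h7 : 0 ≤ (x^2 + ω*(R - x)) / (x * t * L^2) := by
      apply div_nonneg
      · nlinarith
      · positivity
    linarith [hmain]
  · intro htL q hq0 hq1
    have hmain : (ω - x) * (-(t⁻¹) / L^2) - (-μ/x - 1/L) / x - q * (μ / x^2)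
        ≥ (t * L - ω * R) / (x * t * L^2) := by
      have hmain' : (ω - x) * (-(t⁻¹) / L^2) - (-μ/x - 1/L) / x - q * (μ / x^2)
          - (t * L - ω * R) / (x * t * L^2)
          = (1 - q) * (μ / x^2) + (x^2 + ω*(R - x)) / (x * t * L^2) := by
        field_simp
        ring
      have h6 : 0 ≤ (1 - q) * (μ / x^2) :=
        mul_nonneg (by linarith) (by positivity)
      have h7 : 0 ≤ (x^2 + ω*(R - x)) / (x * t * L^2) := by
        apply div_nonneg
        · nlinarith
        · positivity
      linarith [hmain']
    have h8 : 0 ≤ (t * L - ω * R) / (x * t * L^2) := by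
      apply div_nonneg
      · linarith
      · positivity
    linarith
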